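/- In the majority-group game G' constructed from G, if x is an ε-ANE of G' and for some group i and action ℓ there is an action k with u_i(k, x̄_{-i}) − u_i(ℓ, x̄_{-i}) ≥ 2αε, then every player (i,j) in group i assigns probability at most 1/(2α) to action ℓ, and consequently the majority-action distribution satisfies x̄_{i,ℓ} ≤ exp(−s/(2α²)). -/
import Mathlib


open Finset

def IsDist (α : ℕ) (p : Fin α → ℝ) : Prop := (∀ k, 0 ≤ p k) ∧ ∑ k, p k = 1

noncomputable def expPay {I : Type*} [Fintype I] [DecidableEq I] {α : ℕ}
    (u : (I → Fin α) → ℝ) (x : I → Fin α → ℝ) : ℝ :=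
  ∑ a : I → Fin α, (∏ j, x j (a j)) * u a

noncomputable def purePay {I : Type*} [Fintype I] [DecidableEq I] {α : ℕ}
    (u : (I → Fin α) → ℝ) (x : I → Fin α → ℝ) (i : I) (k : Fin α) : ℝ :=
  expPay u (Function.update x i (fun b => if b = k then (1:ℝ) else 0))

def IsANE {I : Type*} [Fintype I] [DecidableEq I] {α : ℕ}
    (u : I → (I → Fin α) → ℝ) (x : I → Fin α → ℝ) (ε : ℝ) : Prop :=
  ∀ i k, purePay (u i) x i k - ε ≤ expPay (u i) x

def IsWSNE {I : Type*} [Fintype I] [DecidableEq I] {α : ℕ}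
    (u : I → (I → Fin α) → ℝ) (x : I → Fin α → ℝ) (ε : ℝ) : Prop :=
  ∀ i k, 0 < x i k → ∀ k', purePay (u i) x i k' - ε ≤ purePay (u i) x i k

noncomputable def tvDist {α : ℕ} (p q : Fin α → ℝ) : ℝ := (1/2) * ∑ k, |p k - q k|

def actCount {s α : ℕ} (g : Fin s → Fin α) (k : Fin α) : ℕ :=
  (Finset.univ.filter fun j => g j = k).card

noncomputable def maj {s α : ℕ} [NeZero α] (g : Fin s → Fin α) : Fin α :=
  (Finset.univ.filter fun k : Fin α => ∀ k', actCount g k' ≤ actCount g k).min' (by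
    obtain ⟨k, -, hk⟩ := Finset.exists_max_image Finset.univ (actCount g) ⟨default, mem_univ _⟩
    exact ⟨k, mem_filter.mpr ⟨mem_univ k, fun k' => hk k' (mem_univ k')⟩⟩)

noncomputable def groupPayoff {n s α : ℕ} [NeZero α]
    (u : Fin n → (Fin n → Fin α) → ℝ) (i : Fin n) (j : Fin s)
    (a : Fin n × Fin s → Fin α) : ℝ :=
  u i (Function.update (fun i' => maj fun j' => a (i', j')) i (a (i, j)))

noncomputable def majDist {n s α : ℕ} [NeZero α]
    (x : Fin n × Fin s → Fin α → ℝ) (i : Fin n) (k : Fin α) : ℝ :=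
  ∑ g : Fin s → Fin α, (∏ j, x (i, j) (g j)) * (if maj g = k then 1 else 0)

lemma bernoulli_mgf {A : ℝ} (hA : 2 ≤ A) {p : ℝ} (hp0 : 0 ≤ p) (hp : p ≤ 1/(2*A)) :
    1 - p + p * Real.exp (2/A) ≤ Real.exp (3/(2*A^2)) := by
  have hA0 : (0:ℝ) < A := by linarith
  set y : ℝ := 1/A with hy
  have hy0 : 0 < y := by positivity
  have hy2 : y ≤ 1/2 := by
    rw [hy, div_le_div_iff₀ hA0 (by norm_num)]; linarith
  have h2y : 2/A = 2*y := by rw [hy]; ring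
  have h32 : 3/(2*A^2) = (3/2)*y^2 := by rw [hy]; field_simp
  rw [h2y, h32]
  have hexp1 : (1:ℝ) ≤ Real.exp (2*y) := Real.one_le_exp (by linarith)
  -- upper bound exp(2y)
  have hub : Real.exp (2*y) ≤ 1 + 2*y + 2*y^2 + (16/9)*y^3 := by
    have h := Real.exp_bound' (x := 2*y) (by linarith) (by linarith) (n := 3) (by norm_num)
    have : (∑ m ∈ Finset.range 3, (2*y) ^ m / m.factorial) = 1 + 2*y + 2*y^2 := by
      simp [Finset.sum_range_succ, Nat.factorial]; ring
    rw [this] at h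
    have h4 : (2*y)^3 * (3+1) / ((3:ℕ).factorial * 3) = (16/9)*y^3 := by
      simp [Nat.factorial]; ring
    norm_num [Nat.factorial] at h
    nlinarith [h]
  -- lower bound exp(1.5 y^2)
  have hlb : 1 + (3/2)*y^2 + ((3/2)*y^2)^2/2 ≤ Real.exp ((3/2)*y^2) := by
    have := Real.quadratic_le_exp_of_nonneg (x := (3/2)*y^2) (by positivity)
    linarith
  -- p (exp(2y)-1) ≤ (y/2)(exp 2y - 1)
  have hpy : p ≤ y/2 := by
    have : 1/(2*A) = y/2 := by rw [hy]; ring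
    linarith [hp, this]
  have hmono : 1 - p + p * Real.exp (2*y) = 1 + p * (Real.exp (2*y) - 1) := by ring
  have key : 1 + (y/2) * (Real.exp (2*y) - 1) ≤ Real.exp ((3/2)*y^2) := by
    have hstep : (y/2) * (Real.exp (2*y) - 1) ≤ (y/2)*(2*y + 2*y^2 + (16/9)*y^3) := by
      apply mul_le_mul_of_nonneg_left _ (by positivity)
      linarith
    have harith : 1 + (y/2)*(2*y + 2*y^2 + (16/9)*y^3) ≤ 1 + (3/2)*y^2 + ((3/2)*y^2)^2/2 := by
      nlinarith [hy0, hy2, sq_nonneg y]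
    linarith
  rw [hmono]
  have : p * (Real.exp (2*y) - 1) ≤ (y/2) * (Real.exp (2*y) - 1) :=
    mul_le_mul_of_nonneg_right hpy (by linarith)
  linarith


lemma expPay_decomp {I : Type*} [Fintype I] [DecidableEq I] {α : ℕ}
    (u : (I → Fin α) → ℝ) (x : I → Fin α → ℝ) (i : I) :
    expPay u x = ∑ m, x i m * purePay u x i m := by
  have hprod : ∀ (m : Fin α) (a : I → Fin α),
      (∏ p, Function.update x i (fun b => if b = m then (1:ℝ) else 0) p (a p))
        = (if a i = m then (1:ℝ) else 0) * ∏ p ∈ univ.erase i, x p (a p) := by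
    intro m a
    rw [← Finset.mul_prod_erase univ _ (mem_univ i), Function.update_self]
    exact congrArg _ (Finset.prod_congr rfl fun p hp => by
      rw [Function.update_of_ne (Finset.ne_of_mem_erase hp)])
  simp only [purePay, expPay, hprod, Finset.mul_sum]
  rw [Finset.sum_comm]
  refine Finset.sum_congr rfl fun a _ => ?_
  have : ∀ m : Fin α, x i m * ((if a i = m then (1:ℝ) else 0) * ((∏ p ∈ univ.erase i, x p (a p)) * u a))
      = (if a i = m then (x i m * ((∏ p ∈ univ.erase i, x p (a p)) * u a)) else 0) := by
    intro m; split <;> simp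
  simp only [mul_assoc, this]
  rw [Finset.sum_ite_eq univ (a i) (fun m => x i m * ((∏ p ∈ univ.erase i, x p (a p)) * u a))]
  simp only [mem_univ, if_true]
  rw [← Finset.mul_prod_erase univ (fun p => x p (a p)) (mem_univ i), mul_assoc]


lemma fiber_factor {n α : ℕ} {β : Type*} [Fintype β] [DecidableEq β]
    (W : Fin n → β → ℝ) (σ : Fin n → β → Fin α) (F : (Fin n → Fin α) → ℝ) :
    ∑ h : Fin n → β, (∏ i', W i' (h i')) * F (fun i' => σ i' (h i'))
      = ∑ b : Fin n → Fin α,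
          (∏ i', ∑ g : β, (if σ i' g = b i' then W i' g else 0)) * F b := by
  have hps : ∀ b : Fin n → Fin α,
      (∏ i', ∑ g : β, (if σ i' g = b i' then W i' g else 0))
        = ∑ h : Fin n → β, ∏ i', (if σ i' (h i') = b i' then W i' (h i') else 0) :=
    fun b => Fintype.prod_sum _
  simp only [hps, Finset.sum_mul]
  rw [Finset.sum_comm]
  refine Finset.sum_congr rfl fun h _ => ?_
  rw [Fintype.sum_eq_single (fun i' => σ i' (h i'))]
  · congr 1
    exact Finset.prod_congr rfl fun i' _ => (if_pos rfl).symm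
  · intro b hb
    obtain ⟨i', hi'⟩ := Function.ne_iff.mp (Ne.symm hb)
    rw [Finset.prod_eq_zero (mem_univ i'), zero_mul]
    exact if_neg hi'



lemma fiberA {s α : ℕ} (z : Fin s → Fin α → ℝ) (j : Fin s) (v : Fin α)
    (hz : ∀ j', j' ≠ j → ∑ w, z j' w = 1) :
    ∑ g : Fin s → Fin α, (if g j = v then ∏ j', z j' (g j') else 0) = z j v := by
  classical
  set F : Fin s → Fin α → ℝ :=
    fun j' w => if j' = j then (if w = v then z j' w else 0) else z j' w with hF
  have hA : ∀ g : Fin s → Fin α,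
      (if g j = v then ∏ j', z j' (g j') else 0) = ∏ j', F j' (g j') := by
    intro g
    by_cases hgv : g j = v
    · rw [if_pos hgv]
      refine Finset.prod_congr rfl fun j' _ => ?_
      by_cases hjj : j' = j
      · subst hjj; simp [hF, hgv]
      · simp [hF, hjj]
    · rw [if_neg hgv, eq_comm]
      exact Finset.prod_eq_zero (mem_univ j) (by simp [hF, hgv])
  calc ∑ g : Fin s → Fin α, (if g j = v then ∏ j', z j' (g j') else 0)
      = ∑ g : Fin s → Fin α, ∏ j', F j' (g j') := Finset.sum_congr rfl fun g _ => hA g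
    _ = ∏ j', ∑ w, F j' w := (Fintype.prod_sum F).symm
    _ = (∑ w, F j w) * ∏ j' ∈ univ.erase j, (∑ w, F j' w) :=
        (Finset.mul_prod_erase univ _ (mem_univ j)).symm
    _ = z j v := by
        have h1 : (∑ w, F j w) = z j v := by simp [hF]
        have h2 : ∏ j' ∈ univ.erase j, (∑ w, F j' w) = 1 := by
          refine Finset.prod_eq_one fun j' hj' => ?_
          have hne := Finset.ne_of_mem_erase hj'
          simp only [hF, if_neg hne]
          exact hz j' hne
        rw [h1, h2, mul_one]

lemma fiberB {s α : ℕ} [NeZero α] {n : ℕ} (x : Fin n × Fin s → Fin α → ℝ)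
    (i' : Fin n) (z : Fin s → Fin α → ℝ) (hz : ∀ j', z j' = x (i', j')) (v : Fin α) :
    ∑ g : Fin s → Fin α, (if maj g = v then ∏ j', z j' (g j') else 0)
      = majDist x i' v := by
  rw [majDist]
  refine Finset.sum_congr rfl fun g _ => ?_
  rw [mul_boole]
  exact if_congr Iff.rfl (Finset.prod_congr rfl fun j' _ => by rw [hz j']) rfl

lemma purePay_group {n s α : ℕ} [NeZero α]
    (u : Fin n → (Fin n → Fin α) → ℝ)
    (x : Fin n × Fin s → Fin α → ℝ) (hx : ∀ ij, IsDist α (x ij))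
    (i : Fin n) (j : Fin s) (m : Fin α) :
    purePay (groupPayoff u i j) x (i, j) m = purePay (u i) (majDist x) i m := by
  classical
  set δ : Fin α → ℝ := fun b => if b = m then (1:ℝ) else 0 with hδ
  set y : Fin n × Fin s → Fin α → ℝ := Function.update x (i,j) δ with hy
  set σ : Fin n → (Fin s → Fin α) → Fin α :=
    fun i' g => if i' = i then g j else maj g with hσ
  have step1 : purePay (groupPayoff u i j) x (i, j) m
      = ∑ h : Fin n → Fin s → Fin α,
          (∏ i', ∏ j', y (i', j') (h i' j')) *
            u i (fun i' => σ i' (h i')) := by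
    rw [purePay, expPay, ← hδ, ← hy]
    refine Fintype.sum_equiv (Equiv.curry (Fin n) (Fin s) (Fin α)) _ _ (fun a => ?_)
    congr 1
    · exact Fintype.prod_prod_type _
    · rw [groupPayoff]
      congr 1
      funext i'
      simp only [Function.update_apply, hσ]
      by_cases hii : i' = i
      · simp only [if_pos hii]; subst hii; rfl
      · simp only [if_neg hii]; rfl
  rw [step1, fiber_factor (fun i' g => ∏ j', y (i', j') (g j')) σ (u i),
    purePay, expPay, ← hδ]
  refine Finset.sum_congr rfl fun b _ => ?_
  congr 1
  refine Finset.prod_congr rfl fun i' _ => ?_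
  by_cases hii : i' = i
  · subst hii
    beta_reduce
    rw [Function.update_self]
    simp only [hσ, if_pos rfl]
    have hz1 : ∀ j', j' ≠ j → ∑ w, y (i', j') w = 1 := by
      intro j' hj'
      rw [hy, Function.update_of_ne (fun hh => hj' (congrArg Prod.snd hh))]
      exact (hx (i', j')).2
    have h := fiberA (fun j'' => y (i', j'')) j (b i') (fun j' hj' => hz1 j' hj')
    beta_reduce at h
    rw [h, hy, Function.update_self]
  · beta_reduce
    rw [Function.update_of_ne hii]
    simp only [hσ, if_neg hii]
    have h := fiberB x i' (fun j'' => y (i', j'')) (fun j' => by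
      show y (i', j') = x (i', j')
      rw [hy, Function.update_of_ne (fun hh => hii (congrArg Prod.fst hh))]) (b i')
    beta_reduce at h
    rw [← h]


lemma maj_count {s α : ℕ} [NeZero α] (g : Fin s → Fin α) : s ≤ α * actCount g (maj g) := by
  classical
  have hmem := Finset.min'_mem
    (Finset.univ.filter fun k : Fin α => ∀ k', actCount g k' ≤ actCount g k) (by
      obtain ⟨k, -, hk⟩ := Finset.exists_max_image Finset.univ (actCount g) ⟨default, mem_univ _⟩
      exact ⟨k, mem_filter.mpr ⟨mem_univ k, fun k' => hk k' (mem_univ k')⟩⟩)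
  have hmax : ∀ k', actCount g k' ≤ actCount g (maj g) := (mem_filter.mp hmem).2
  have hsum : ∑ k : Fin α, actCount g k = s := by
    have h := Finset.card_eq_sum_card_fiberwise (f := g) (s := univ) (t := univ)
      (fun x _ => mem_univ (g x))
    simp only [Finset.card_univ, Fintype.card_fin] at h
    exact (by simpa [actCount] using h.symm)
  calc s = ∑ k : Fin α, actCount g k := hsum.symm
    _ ≤ ∑ _k : Fin α, actCount g (maj g) := Finset.sum_le_sum fun k _ => hmax k
    _ = α * actCount g (maj g) := by simp [mul_comm]

lemma chernoff {n s α : ℕ} [NeZero α] (hα : 2 ≤ α)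
    (x : Fin n × Fin s → Fin α → ℝ) (hx : ∀ ij, IsDist α (x ij)) (i : Fin n) (ℓ : Fin α)
    (hp : ∀ j, x (i, j) ℓ ≤ 1/(2*(α:ℝ))) :
    majDist x i ℓ ≤ Real.exp (-(s:ℝ)/(2*(α:ℝ)^2)) := by
  classical
  set A : ℝ := (α : ℝ) with hA
  have hA2 : (2:ℝ) ≤ A := by rw [hA]; exact_mod_cast hα
  have hA0 : (0:ℝ) < A := by linarith
  set t : ℝ := 2/A with ht
  have ht0 : 0 < t := by positivity
  -- step 1: termwise bound by exponential
  have step1 : majDist x i ℓ ≤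
      ∑ g : Fin s → Fin α, (∏ j, x (i, j) (g j)) *
        (Real.exp (-(t*s/A)) * ∏ j, Real.exp (t * (if g j = ℓ then (1:ℝ) else 0))) := by
    rw [majDist]
    refine Finset.sum_le_sum fun g _ => ?_
    have hprodnn : 0 ≤ ∏ j, x (i, j) (g j) :=
      Finset.prod_nonneg fun j _ => (hx (i, j)).1 (g j)
    refine mul_le_mul_of_nonneg_left ?_ hprodnn
    have hexp : Real.exp (-(t*s/A)) * ∏ j, Real.exp (t * (if g j = ℓ then (1:ℝ) else 0))
        = Real.exp (t * actCount g ℓ - t*s/A) := by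
      rw [← Real.exp_sum, ← Real.exp_add]
      congr 1
      have hcount : (actCount g ℓ : ℝ) = ∑ j, (if g j = ℓ then (1:ℝ) else 0) := by
        rw [actCount, Finset.card_filter]
        push_cast
        rfl
      rw [← Finset.mul_sum, ← hcount]
      ring
    rw [hexp]
    by_cases hm : maj g = ℓ
    · rw [if_pos hm]
      apply Real.one_le_exp
      have hc := maj_count g
      rw [hm] at hc
      have hc' : (s:ℝ) ≤ A * (actCount g ℓ : ℝ) := by rw [hA]; exact_mod_cast hc
      have : t*s/A ≤ t * actCount g ℓ := by
        rw [div_le_iff₀ hA0]  -- t*s/A ≤ ... ↔ t*s ≤ (t*count)*A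
        nlinarith [hc', ht0.le]
      linarith
    · rw [if_neg hm]; positivity
  -- step 2: factorize the sum
  have step2 : ∑ g : Fin s → Fin α, (∏ j, x (i, j) (g j)) *
        (Real.exp (-(t*s/A)) * ∏ j, Real.exp (t * (if g j = ℓ then (1:ℝ) else 0)))
      = Real.exp (-(t*s/A)) *
          ∏ j, (∑ v, x (i, j) v * Real.exp (t * (if v = ℓ then (1:ℝ) else 0))) := by
    rw [Fintype.prod_sum (fun j v => x (i, j) v * Real.exp (t * (if v = ℓ then (1:ℝ) else 0)))]
    rw [Finset.mul_sum]
    refine Finset.sum_congr rfl fun g _ => ?_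
    rw [Finset.prod_mul_distrib]
    ring
  -- step 3: bound each factor
  have step3 : ∀ j : Fin s,
      (∑ v, x (i, j) v * Real.exp (t * (if v = ℓ then (1:ℝ) else 0)))
        ≤ Real.exp (3/(2*A^2)) := by
    intro j
    set p : ℝ := x (i, j) ℓ with hpdef
    have hsum : ∑ v, x (i, j) v * Real.exp (t * (if v = ℓ then (1:ℝ) else 0))
        = 1 - p + p * Real.exp t := by
      have : ∀ v : Fin α, x (i, j) v * Real.exp (t * (if v = ℓ then (1:ℝ) else 0))
          = x (i, j) v + (if v = ℓ then p * Real.exp t - p else 0) := by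
        intro v
        by_cases hv : v = ℓ
        · subst hv; rw [if_pos rfl, if_pos rfl, mul_one, ← hpdef]; ring
        · rw [if_neg hv, if_neg hv, mul_zero, Real.exp_zero, mul_one, add_zero]
      simp only [this, Finset.sum_add_distrib, (hx (i, j)).2, Finset.sum_ite_eq' univ ℓ
        (fun _ => p * Real.exp t - p), mem_univ, if_true]
      ring
    rw [hsum, ht]
    exact bernoulli_mgf hA2 ((hx (i, j)).1 ℓ) (hp j)
  -- assemble
  have step4 : (∏ j : Fin s, (∑ v, x (i, j) v * Real.exp (t * (if v = ℓ then (1:ℝ) else 0))))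
      ≤ Real.exp (3/(2*A^2)) ^ s := by
    have hc : Real.exp (3/(2*A^2)) ^ s = ∏ _j : Fin s, Real.exp (3/(2*A^2)) := by
      rw [Finset.prod_const, Finset.card_univ, Fintype.card_fin]
    rw [hc]
    refine Finset.prod_le_prod (fun j _ => ?_) (fun j _ => step3 j)
    exact Finset.sum_nonneg fun v _ => mul_nonneg ((hx (i, j)).1 v) (Real.exp_pos _).le
  calc majDist x i ℓ ≤ _ := step1
    _ = _ := step2
    _ ≤ Real.exp (-(t*s/A)) * Real.exp (3/(2*A^2)) ^ s :=
        mul_le_mul_of_nonneg_left step4 (Real.exp_pos _).le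
    _ = Real.exp (-(s:ℝ)/(2*A^2)) := by
        rw [← Real.exp_nat_mul, ← Real.exp_add]
        congr 1
        rw [ht]
        field_simp
        ring


theorem group_gap_bounds {n s α : ℕ} (hα : 0 < α) (hs : 0 < s) [NeZero α]
    (ε : ℝ) (hε : 0 < ε)
    (u : Fin n → (Fin n → Fin α) → ℝ)
    (hu : ∀ i a, u i a ∈ Set.Icc (0:ℝ) 1)
    (x : Fin n × Fin s → Fin α → ℝ) (hx : ∀ ij, IsDist α (x ij))
    (hane : IsANE (fun ij : Fin n × Fin s => groupPayoff u ij.1 ij.2) x ε)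
    (i : Fin n) (ℓ k : Fin α)
    (hgap : 2 * α * ε ≤ purePay (u i) (majDist x) i k - purePay (u i) (majDist x) i ℓ) :
    (∀ j : Fin s, x (i, j) ℓ ≤ 1 / (2 * α)) ∧
      majDist x i ℓ ≤ Real.exp (-(s : ℝ) / (2 * α ^ 2)) := by
  classical
  have hα2 : 2 ≤ α := by
    by_contra hlt
    have hα1 : α = 1 := by omega
    subst hα1
    have hkl : k = ℓ := Subsingleton.elim k ℓ
    rw [hkl] at hgap
    simp only [sub_self] at hgap
    have : (0:ℝ) < 2 * (1:ℕ) * ε := by norm_num; linarith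
    linarith
  have key : ∀ j : Fin s, x (i, j) ℓ ≤ 1 / (2 * (α:ℝ)) := by
    intro j
    have hEdec : expPay (groupPayoff u i j) x
        = ∑ m, x (i, j) m * purePay (groupPayoff u i j) x (i, j) m :=
      expPay_decomp _ x (i, j)
    have hPP : ∀ m, purePay (groupPayoff u i j) x (i, j) m
        = purePay (u i) (majDist x) i m := fun m => purePay_group u x hx i j m
    have hane' : ∀ m, purePay (u i) (majDist x) i m - ε ≤ expPay (groupPayoff u i j) x := by
      intro m
      have h := hane (i, j) m
      rwa [hPP m] at h
    rw [Finset.sum_congr rfl (fun m _ => by rw [hPP m])] at hEdec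
    have hsplit : expPay (groupPayoff u i j) x
        = x (i, j) ℓ * purePay (u i) (majDist x) i ℓ
          + ∑ m ∈ univ.erase ℓ, x (i, j) m * purePay (u i) (majDist x) i m := by
      rw [hEdec]
      exact (Finset.add_sum_erase univ _ (mem_univ ℓ)).symm
    have herase_sum : ∑ m ∈ univ.erase ℓ, x (i, j) m = 1 - x (i, j) ℓ := by
      rw [Finset.sum_erase_eq_sub (mem_univ ℓ), (hx (i, j)).2]
    have hbound : ∑ m ∈ univ.erase ℓ, x (i, j) m * purePay (u i) (majDist x) i m
        ≤ (1 - x (i, j) ℓ) * (expPay (groupPayoff u i j) x + ε) := by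
      rw [← herase_sum, Finset.sum_mul]
      refine Finset.sum_le_sum fun m _ => ?_
      exact mul_le_mul_of_nonneg_left (by linarith [hane' m]) ((hx (i, j)).1 m)
    have hxl0 : 0 ≤ x (i, j) ℓ := (hx (i, j)).1 ℓ
    have hgE : purePay (u i) (majDist x) i k - ε ≤ expPay (groupPayoff u i j) x := hane' k
    have hprod : 0 ≤ x (i, j) ℓ *
        (expPay (groupPayoff u i j) x - (purePay (u i) (majDist x) i k - ε)) :=
      mul_nonneg hxl0 (by linarith)
    have hineq : x (i, j) ℓ *
        (purePay (u i) (majDist x) i k - purePay (u i) (majDist x) i ℓ) ≤ ε := by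
      nlinarith [hsplit, hbound, hprod, hxl0]
    have hα0 : (0:ℝ) < 2 * (α:ℝ) := by
      have : (1:ℝ) ≤ (α:ℝ) := by exact_mod_cast hα
      linarith
    rw [le_div_iff₀ hα0]
    have h1 : x (i, j) ℓ * (2 * (α:ℝ) * ε)
        ≤ x (i, j) ℓ * (purePay (u i) (majDist x) i k - purePay (u i) (majDist x) i ℓ) :=
      mul_le_mul_of_nonneg_left hgap hxl0
    nlinarith [h1, hineq, hε]
  exact ⟨key, chernoff hα2 x hx i ℓ key⟩
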